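/- Let L ⊆ ℤⁿ be a zonotopal lattice whose real span F = span_ℝ(L) has dimension d, let π : ℝⁿ → F be the orthogonal projection with respect to the standard inner product, and set yᵢ = π(eᵢ). Let X = (x₁,…,xₙ) be a vector configuration spanning ℝ^d, and suppose there exist a linear map A : ℝⁿ → ℝ^d and positive reals λ₁,…,λₙ with xᵢ = λᵢ A(yᵢ) for all i. Then for the weighted inner product (x,y) = Σᵢ λᵢxᵢyᵢ on ℝⁿ there is a linear bijection T : F → ℝ^d with T(DV(L)) = Z(X); i.e., the Dirichlet–Voronoi polytope of (L,(·,·)) is affinely equivalent to the zonotope Z(X). -/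

import Mathlib

/-- The support of an integer vector: the set of its nonzero coordinates. -/
def supp {n : ℕ} (v : Fin n → ℤ) : Set (Fin n) := {i | v i ≠ 0}

/-- `v` is an elementary vector of the lattice `L ⊆ ℤⁿ`: it is a nonzero lattice
vector with entries in `{-1,0,+1}` whose support is minimal among supports of
nonzero lattice vectors. -/
def IsElementary {n : ℕ} (L : AddSubgroup (Fin n → ℤ)) (v : Fin n → ℤ) : Prop :=
  v ∈ L ∧ v ≠ 0 ∧ (∀ i, v i = -1 ∨ v i = 0 ∨ v i = 1) ∧
    ∀ u ∈ L, u ≠ 0 → ¬ (supp u ⊂ supp v)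

/-- A lattice `L ⊆ ℤⁿ` is zonotopal if every nonzero lattice vector's support
contains the support of some elementary vector. -/
def IsZonotopal {n : ℕ} (L : AddSubgroup (Fin n → ℤ)) : Prop :=
  ∀ v ∈ L, v ≠ 0 → ∃ u, IsElementary L u ∧ supp u ⊆ supp v

/-- The weighted inner product on `ℝⁿ` with weights `lam`. -/
def wip {n : ℕ} (lam : Fin n → ℝ) (x y : Fin n → ℝ) : ℝ := ∑ i, lam i * x i * y i

/-- Coordinatewise cast of an integer vector to a real vector. -/
def icast {n : ℕ} (v : Fin n → ℤ) : Fin n → ℝ := fun i => (v i : ℝ)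

/-- The real span `F` of a lattice `L ⊆ ℤⁿ`. -/
def latticeSpan {n : ℕ} (L : AddSubgroup (Fin n → ℤ)) : Submodule ℝ (Fin n → ℝ) :=
  Submodule.span ℝ (icast '' (L : Set (Fin n → ℤ)))

/-- The Dirichlet-Voronoi polytope of a lattice `L ⊆ ℤⁿ` with respect to the
weighted inner product with weights `lam`. -/
def DV {n : ℕ} (L : AddSubgroup (Fin n → ℤ)) (lam : Fin n → ℝ) : Set (Fin n → ℝ) :=
  {x | x ∈ latticeSpan L ∧
    ∀ v ∈ L, wip lam x (icast v) ≤ wip lam (icast v) (icast v) / 2}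

/-- `v` is a strict Voronoi vector of `L` with respect to the weighted inner
product with weights `lam`: `±v` are the unique shortest vectors of `v + 2L`. -/
def IsStrictVoronoi {n : ℕ} (L : AddSubgroup (Fin n → ℤ)) (lam : Fin n → ℝ)
    (v : Fin n → ℤ) : Prop :=
  v ∈ L ∧ v ≠ 0 ∧ ∀ w ∈ L, v + 2 • w ≠ v → v + 2 • w ≠ -v →
    wip lam (icast v) (icast v) <
      wip lam (icast (v + 2 • w)) (icast (v + 2 • w))

/-- Two integer vectors are conformal if their entries never have opposite signs. -/
def IsConformal {n : ℕ} (v w : Fin n → ℤ) : Prop := ∀ i, 0 ≤ v i * w i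

/-- The sign of a real number, as an integer in `{-1,0,+1}`. -/
noncomputable def sgnR (t : ℝ) : ℤ := if 0 < t then 1 else if t < 0 then -1 else 0

/-- A covector of the vector configuration `X`: the sign vector of the values of a
linear functional on the configuration. -/
def IsCovector {n d : ℕ} (X : Fin n → Fin d → ℝ) (s : Fin n → ℤ) : Prop :=
  ∃ f : (Fin d → ℝ) →ₗ[ℝ] ℝ, ∀ i, s i = sgnR (f (X i))

/-- A cocircuit of the vector configuration `X`: a nonzero covector of minimal support. -/
def IsCocircuit {n d : ℕ} (X : Fin n → Fin d → ℝ) (s : Fin n → ℤ) : Prop :=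
  IsCovector X s ∧ s ≠ 0 ∧ ∀ t, IsCovector X t → t ≠ 0 → ¬ (supp t ⊂ supp s)

/-- The lattice in `ℤⁿ` generated by the cocircuits of `X`. -/
def cocircuitLattice {n d : ℕ} (X : Fin n → Fin d → ℝ) : AddSubgroup (Fin n → ℤ) :=
  AddSubgroup.closure {s | IsCocircuit X s}

/-- A linear subspace of `ℝ^d` spanned by a subset of the configuration `X`. -/
def SpannedSubspace {n d : ℕ} (X : Fin n → Fin d → ℝ)
    (W : Submodule ℝ (Fin d → ℝ)) : Prop :=
  ∃ S : Set (Fin n), W = Submodule.span ℝ (X '' S)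

/-- McMullen's condition (II): every `(d-2)`-dimensional subspace spanned by vectors
of `X` is contained in exactly `2` or `3` hyperplanes spanned by vectors of `X`. -/
def ConditionII {n d : ℕ} (X : Fin n → Fin d → ℝ) : Prop :=
  ∀ W : Submodule ℝ (Fin d → ℝ), SpannedSubspace X W → Module.finrank ℝ W = d - 2 →
    {H : Submodule ℝ (Fin d → ℝ) |
        SpannedSubspace X H ∧ Module.finrank ℝ H = d - 1 ∧ W ≤ H}.ncard = 2 ∨
    {H : Submodule ℝ (Fin d → ℝ) |
        SpannedSubspace X H ∧ Module.finrank ℝ H = d - 1 ∧ W ≤ H}.ncard = 3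

/-- The zonotope generated by the vector configuration `X`, i.e. the Minkowski sum
of the segments `conv{xᵢ, -xᵢ}`. -/
def zonotope {n d : ℕ} (X : Fin n → Fin d → ℝ) : Set (Fin d → ℝ) :=
  {z | ∃ c : Fin n → ℝ, (∀ i, |c i| ≤ 1) ∧ z = ∑ i, c i • X i}

/-- `P` tiles `ℝ^d` face-to-face by translations: some family of translates of `P`
covers `ℝ^d`, and any two distinct translates intersect in a common (possibly empty)
exposed face. -/
def TilesFaceToFace {d : ℕ} (P : Set (Fin d → ℝ)) : Prop :=
  ∃ T : Set (Fin d → ℝ),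
    (∀ x, ∃ t ∈ T, x ∈ (t + ·) '' P) ∧
    ∀ s ∈ T, ∀ t ∈ T, s ≠ t →
      IsExposed ℝ ((s + ·) '' P) (((s + ·) '' P) ∩ ((t + ·) '' P)) ∧
      IsExposed ℝ ((t + ·) '' P) (((s + ·) '' P) ∩ ((t + ·) '' P))

/-- If the configuration `X` spanning `ℝ^d` is projectively equivalent
(via `A` and positive scalars `lam`) to the configuration of projections `yᵢ = π eᵢ`
onto the real span of a zonotopal lattice `L` of rank `d`, then for the weighted
inner product with weights `lam` the Dirichlet-Voronoi polytope `DV L lam` is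
affinely equivalent to the zonotope `Z(X)`. -/
-- ## wip basics
lemma wip_comm {n : ℕ} (lam x y : Fin n → ℝ) : wip lam x y = wip lam y x := by
  unfold wip; congr 1; ext i; ring

lemma wip_add_left {n : ℕ} (lam x y z : Fin n → ℝ) :
    wip lam (x + y) z = wip lam x z + wip lam y z := by
  unfold wip; rw [← Finset.sum_add_distrib]; congr 1; ext i; simp [Pi.add_apply]; ring

lemma wip_sub_left {n : ℕ} (lam x y z : Fin n → ℝ) :
    wip lam (x - y) z = wip lam x z - wip lam y z := by
  unfold wip; rw [← Finset.sum_sub_distrib]; congr 1; ext i; simp [Pi.sub_apply]; ring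

lemma wip_smul_left {n : ℕ} (lam : Fin n → ℝ) (t : ℝ) (x z : Fin n → ℝ) :
    wip lam (t • x) z = t * wip lam x z := by
  unfold wip; rw [Finset.mul_sum]; congr 1; ext i; simp [Pi.smul_apply]; ring

lemma wip_self_nonneg {n : ℕ} {lam : Fin n → ℝ} (hlam : ∀ i, 0 < lam i) (x : Fin n → ℝ) :
    0 ≤ wip lam x x := by
  apply Finset.sum_nonneg; intro i _
  have := (hlam i).le; nlinarith [sq_nonneg (x i)]

lemma eq_zero_of_wip_self {n : ℕ} {lam : Fin n → ℝ} (hlam : ∀ i, 0 < lam i)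
    {x : Fin n → ℝ} (h : wip lam x x = 0) : x = 0 := by
  have h0 : ∀ i ∈ Finset.univ, 0 ≤ lam i * x i * x i := by
    intro i _; have := (hlam i).le; nlinarith [sq_nonneg (x i)]
  have := (Finset.sum_eq_zero_iff_of_nonneg h0).mp h
  funext i
  have hi := this i (Finset.mem_univ i)
  have := hlam i
  simp only [Pi.zero_apply]
  rcases mul_eq_zero.mp hi with h1 | h1
  · rcases mul_eq_zero.mp h1 with h2 | h2
    · exact absurd h2 (ne_of_gt this)
    · exact h2
  · exact h1

-- ## Lemma A : rational kernel argument
lemma exists_lattice_vanishing {n : ℕ} (L : AddSubgroup (Fin n → ℤ)) {u : Fin n → ℝ}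
    (hu : u ∈ latticeSpan L) (hne : u ≠ 0) :
    ∃ v ∈ L, v ≠ 0 ∧ ∀ i, u i = 0 → v i = 0 := by
  by_contra hcon
  push_neg at hcon
  have h : ∀ v ∈ L, (∀ i, u i = 0 → v i = 0) → v = 0 := by
    intro v hv hsupp
    by_contra hv0
    obtain ⟨i, hi1, hi2⟩ := hcon v hv hv0
    exact hi2 (hsupp i hi1)
  rw [latticeSpan, Submodule.mem_span_set'] at hu
  obtain ⟨m, c, g, hsum⟩ := hu
  have hg : ∀ j, ∃ v : Fin n → ℤ, v ∈ L ∧ icast v = (g j : Fin n → ℝ) := by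
    intro j
    obtain ⟨v, hv, hveq⟩ := (g j).2
    exact ⟨v, hv, hveq⟩
  choose v hvL hvic using hg
  classical
  -- rational matrices
  set B : Matrix (Fin n) (Fin m) ℚ := fun i j => if u i = 0 then ((v j i : ℚ)) else 0 with hB
  set C : Matrix (Fin n) (Fin m) ℚ := fun i j => ((v j i : ℚ)) with hC
  -- kernel inclusion over ℚ
  have hker : ∀ q : Fin m → ℚ, B.mulVec q = 0 → C.mulVec q = 0 := by
    intro q hq
    set N : ℤ := ∏ j, ((q j).den : ℤ) with hN
    have hNne : (N : ℚ) ≠ 0 := by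
      simp only [hN]
      push_cast
      exact Finset.prod_ne_zero_iff.2 fun j _ => Nat.cast_ne_zero.2 (q j).den_nz
    set z : Fin m → ℤ := fun j => (q j).num * ∏ k ∈ Finset.univ.erase j, ((q k).den : ℤ) with hz
    have hzq : ∀ j, (z j : ℚ) = q j * N := by
      intro j
      have hden : (N : ℚ) = ((q j).den : ℚ) * ∏ k ∈ Finset.univ.erase j, ((q k).den : ℚ) := by
        rw [hN]; push_cast
        rw [← Finset.mul_prod_erase _ _ (Finset.mem_univ j)]
      rw [hz, hden]
      push_cast
      rw [← mul_assoc]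
      congr 1
      rw [mul_comm]
      exact (Rat.den_mul_eq_num (q j)).symm ▸ rfl
    set w : Fin n → ℤ := fun i => ∑ j, z j * v j i with hw
    have hwL : w ∈ L := by
      have : w = ∑ j, z j • v j := by
        funext i; simp [hw, Finset.sum_apply]
      rw [this]
      exact AddSubgroup.sum_mem L fun j _ => AddSubgroup.zsmul_mem L (hvL j) _
    have hwv : ∀ i, u i = 0 → w i = 0 := by
      intro i hi
      have hBq := congrFun hq i
      simp only [Matrix.mulVec, dotProduct, hB, hi, if_true, Pi.zero_apply] at hBq
      have : ((w i : ℚ)) = N * ∑ j, (v j i : ℚ) * q j := by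
        rw [hw]; push_cast
        rw [Finset.mul_sum]
        congr 1; ext j
        rw [hzq j]; ring
      rw [hBq, mul_zero] at this
      exact_mod_cast this
    have hw0 := h w hwL hwv
    funext i
    have : ((w i : ℚ)) = N * ∑ j, (v j i : ℚ) * q j := by
      rw [hw]; push_cast
      rw [Finset.mul_sum]
      congr 1; ext j
      rw [hzq j]; ring
    rw [hw0] at this
    simp only [Pi.zero_apply, Int.cast_zero] at this
    have hsum0 : ∑ j, (v j i : ℚ) * q j = 0 := by
      rcases mul_eq_zero.mp this.symm with h1 | h1
      · exact absurd h1 hNne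
      · exact h1
    simp only [Matrix.mulVec, dotProduct, hC, Pi.zero_apply]
    exact hsum0
  -- factor C through B over Q
  set fq : (Fin m → ℚ) →ₗ[ℚ] (Fin n → ℚ) := B.mulVecLin with hfq
  set gq : (Fin m → ℚ) →ₗ[ℚ] (Fin n → ℚ) := C.mulVecLin with hgq
  have hkerle : LinearMap.ker fq ≤ LinearMap.ker gq := by
    intro q hq
    exact LinearMap.mem_ker.2 (hker q (LinearMap.mem_ker.1 hq))
  obtain ⟨h₀, hh₀⟩ := LinearMap.exists_extend
    (((LinearMap.ker fq).liftQ gq hkerle).comp fq.quotKerEquivRange.symm.toLinearMap)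
  have hfact : ∀ q, gq q = h₀ (fq q) := by
    intro q
    have h1 : fq q = (LinearMap.range fq).subtype ⟨fq q, LinearMap.mem_range_self fq q⟩ := rfl
    rw [h1, ← LinearMap.comp_apply, hh₀]
    simp only [LinearMap.comp_apply, LinearEquiv.coe_toLinearMap]
    rw [LinearMap.quotKerEquivRange_symm_apply_image]
    simp [Submodule.liftQ_apply]
  set G : Matrix (Fin n) (Fin n) ℚ := LinearMap.toMatrix' h₀ with hG
  have hentry : ∀ i j, C i j = ∑ k, G i k * B k j := by
    intro i j
    have h2 := congrFun (hfact (Pi.single j 1)) i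
    have h3 : gq (Pi.single j 1) i = C i j := by
      simp [hgq, Matrix.mulVecLin_apply, Matrix.mulVec_single]
    have h4 : h₀ (fq (Pi.single j 1)) i = ∑ k, G i k * B k j := by
      have h5 : h₀ = Matrix.toLin' G := by rw [hG, Matrix.toLin'_toMatrix']
      rw [h5]
      simp [hfq, Matrix.toLin'_apply, Matrix.mulVecLin_apply, Matrix.mulVec_single,
        Matrix.mulVec, dotProduct]
    rw [← h3, h2, h4]
  -- transfer to R and conclude u = 0
  set Gr : Matrix (Fin n) (Fin n) ℝ := fun i k => ((G i k : ℚ) : ℝ) with hGr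
  have hu_i : ∀ i, u i = ∑ j, (v j i : ℝ) * c j := by
    intro i
    rw [← hsum]
    simp only [Finset.sum_apply, Pi.smul_apply, smul_eq_mul]
    congr 1; ext j
    rw [← hvic j]
    simp [icast]; ring
  have hentryR : ∀ i j, (v j i : ℝ) = ∑ k, Gr i k * (if u k = 0 then ((v j k : ℝ)) else 0) := by
    intro i j
    have h6 := hentry i j
    simp only [hC, hB] at h6
    have hcast := congrArg (fun (x : ℚ) => (x : ℝ)) h6
    push_cast at hcast
    rw [hcast]
    congr 1; ext k
    simp only [hGr]
    by_cases hk : u k = 0 <;> simp [hk]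
  have hzero : ∀ k, (if u k = 0 then (∑ j, (v j k : ℝ) * c j) else (0:ℝ)) = 0 := by
    intro k
    by_cases hk : u k = 0
    · rw [if_pos hk, ← hu_i k, hk]
    · rw [if_neg hk]
  apply hne
  funext i
  rw [Pi.zero_apply, hu_i i]
  calc ∑ j, (v j i : ℝ) * c j
      = ∑ j, (∑ k, Gr i k * (if u k = 0 then ((v j k : ℝ)) else 0)) * c j := by
        congr 1; ext j; rw [← hentryR i j]
    _ = ∑ j, ∑ k, Gr i k * ((if u k = 0 then ((v j k : ℝ)) else 0) * c j) := by
        congr 1; ext j; rw [Finset.sum_mul]; congr 1; ext k; ring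
    _ = ∑ k, ∑ j, Gr i k * ((if u k = 0 then ((v j k : ℝ)) else 0) * c j) := Finset.sum_comm
    _ = ∑ k, Gr i k * (if u k = 0 then (∑ j, (v j k : ℝ) * c j) else 0) := by
        congr 1; ext k
        rw [← Finset.mul_sum]
        congr 1
        by_cases hk : u k = 0
        · simp [hk]
        · simp [hk]
    _ = 0 := by
        apply Finset.sum_eq_zero
        intro k _
        rw [hzero k, mul_zero]

-- ## elementary vector basics
lemma supp_neg {n : ℕ} (e : Fin n → ℤ) : supp (-e) = supp e := by
  ext i; simp [supp]

lemma neg_isElementary {n : ℕ} {L : AddSubgroup (Fin n → ℤ)} {e : Fin n → ℤ}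
    (he : IsElementary L e) : IsElementary L (-e) := by
  obtain ⟨h1, h2, h3, h4⟩ := he
  refine ⟨neg_mem h1, neg_ne_zero.2 h2, fun i => ?_, fun u hu hu0 => ?_⟩
  · rcases h3 i with h | h | h <;> simp [h]
  · rw [supp_neg]; exact h4 u hu hu0

-- ## Step 1: conformal elementary vector
lemma exists_conformal_elementary {n : ℕ} {L : AddSubgroup (Fin n → ℤ)}
    (hL : IsZonotopal L) {u : Fin n → ℝ} (hu : u ∈ latticeSpan L) (hne : u ≠ 0) :
    ∃ w, IsElementary L w ∧ (∀ i, 0 ≤ (w i : ℝ) * u i) ∧ (∀ i, u i = 0 → w i = 0) := by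
  classical
  set S : Set (Fin n → ℝ) := {w | w ∈ latticeSpan L ∧ w ≠ 0 ∧ (∀ i, 0 ≤ w i * u i) ∧
    (∀ i, u i = 0 → w i = 0)} with hS
  have huS : u ∈ S := ⟨hu, hne, fun i => mul_self_nonneg (u i), fun i h => h⟩
  set cardsupp : (Fin n → ℝ) → ℕ := fun w => (Finset.univ.filter (fun i => w i ≠ 0)).card
    with hcs
  have hNE : (cardsupp '' S).Nonempty := ⟨cardsupp u, u, huS, rfl⟩
  obtain ⟨w₀, hw₀S, hw₀k⟩ := Nat.sInf_mem hNE
  have hmincard : ∀ w ∈ S, cardsupp w₀ ≤ cardsupp w := by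
    intro w hw
    rw [hw₀k]
    exact Nat.sInf_le ⟨w, hw, rfl⟩
  obtain ⟨hw₀F, hw₀ne, hw₀conf, hw₀supp⟩ := hw₀S
  -- the key minimality property
  have key : ∀ v : Fin n → ℝ, v ∈ latticeSpan L → (∀ i, w₀ i = 0 → v i = 0) →
      (∃ i₀, w₀ i₀ ≠ 0 ∧ v i₀ = 0) → (∃ i, 0 < v i * w₀ i) → False := by
    rintro v hvF hvsupp ⟨i₀, hi₀, hvi₀⟩ ⟨i₁, hpos⟩
    set A : Finset (Fin n) := Finset.univ.filter (fun i => 0 < v i * w₀ i) with hA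
    have hAne : A.Nonempty := ⟨i₁, by simp [hA, hpos]⟩
    obtain ⟨istar, histar, hmin⟩ := Finset.exists_min_image A (fun i => w₀ i / v i) hAne
    have histar' : 0 < v istar * w₀ istar := by
      simpa [hA] using histar
    have hvistar : v istar ≠ 0 := by
      intro h; rw [h] at histar'; simp at histar'
    set t : ℝ := w₀ istar / v istar with ht
    have htpos : 0 < t := by
      rw [ht]
      rcases mul_pos_iff.mp histar' with ⟨h1, h2⟩ | ⟨h1, h2⟩
      · exact div_pos h2 h1
      · exact div_pos_of_neg_of_neg h2 h1
    set w' : Fin n → ℝ := w₀ - t • v with hw'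
    have hw'F : w' ∈ latticeSpan L := Submodule.sub_mem _ hw₀F (Submodule.smul_mem _ t hvF)
    have hw'supp : ∀ i, w₀ i = 0 → w' i = 0 := by
      intro i h
      simp [hw', h, hvsupp i h]
    have hw'usupp : ∀ i, u i = 0 → w' i = 0 := fun i h => hw'supp i (hw₀supp i h)
    have hw'w₀ : ∀ i, 0 ≤ w' i * w₀ i := by
      intro i
      by_cases hvi : v i = 0
      · simp [hw', hvi]; exact mul_self_nonneg _
      · have hw₀i : w₀ i ≠ 0 := fun h => hvi (hvsupp i h)
        by_cases hiA : 0 < v i * w₀ i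
        · have hle : t ≤ w₀ i / v i := hmin i (by simp [hA, hiA])
          have heq : (w₀ i / v i) * (v i * w₀ i) = w₀ i * w₀ i := by
            field_simp
          have : t * (v i * w₀ i) ≤ w₀ i * w₀ i := by
            calc t * (v i * w₀ i) ≤ (w₀ i / v i) * (v i * w₀ i) :=
              mul_le_mul_of_nonneg_right hle (le_of_lt hiA)
            _ = w₀ i * w₀ i := heq
          simp only [hw', Pi.sub_apply, Pi.smul_apply, smul_eq_mul]
          nlinarith
        · have hneg : v i * w₀ i < 0 := by
            rcases lt_trichotomy (v i * w₀ i) 0 with h | h | h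
            · exact h
            · exact absurd (mul_eq_zero.mp h) (by push_neg; exact ⟨hvi, hw₀i⟩)
            · exact absurd h hiA
          have h7 : t * (v i * w₀ i) < 0 := mul_neg_of_pos_of_neg htpos hneg
          simp only [hw', Pi.sub_apply, Pi.smul_apply, smul_eq_mul]
          nlinarith [sq_nonneg (w₀ i)]
    have hw'conf : ∀ i, 0 ≤ w' i * u i := by
      intro i
      by_cases hw₀i : w₀ i = 0
      · rw [hw'supp i hw₀i, zero_mul]
      · have h1 : 0 ≤ (w' i * w₀ i) * (w₀ i * u i) := mul_nonneg (hw'w₀ i) (hw₀conf i)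
        have h2 : 0 < w₀ i * w₀ i := by
          rcases lt_or_gt_of_ne hw₀i with h | h <;> nlinarith
        nlinarith
    have hw'ne : w' ≠ 0 := by
      intro h
      have := congrFun h i₀
      simp [hw', hvi₀] at this
      exact hi₀ this
    have hw'istar : w' istar = 0 := by
      simp only [hw', Pi.sub_apply, Pi.smul_apply, smul_eq_mul, ht]
      field_simp
      ring
    have hcard : cardsupp w' < cardsupp w₀ := by
      apply Finset.card_lt_card
      constructor
      · intro i hi
        simp only [Finset.mem_filter, Finset.mem_univ, true_and] at hi ⊢
        intro h
        exact hi (hw'supp i h)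
      · intro hsub
        have histar2 : istar ∈ Finset.univ.filter (fun i => w₀ i ≠ 0) := by
          simp only [Finset.mem_filter, Finset.mem_univ, true_and]
          intro h; rw [h] at histar'; simp at histar'
        have := hsub histar2
        simp only [Finset.mem_filter, Finset.mem_univ, true_and] at this
        exact this hw'istar
    exact absurd (hmincard w' ⟨hw'F, hw'ne, hw'conf, hw'usupp⟩) (not_le.2 hcard)
  -- now produce the elementary vector
  obtain ⟨v₁, hv₁L, hv₁ne, hv₁supp⟩ := exists_lattice_vanishing L hw₀F hw₀ne
  obtain ⟨e, he, hesupp⟩ := hL v₁ hv₁L hv₁ne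
  have hesupp' : ∀ i, w₀ i = 0 → e i = 0 := by
    intro i h
    by_contra he0
    exact absurd (hv₁supp i) (by intro hcontra; exact absurd (hcontra h) (hesupp he0))
  obtain ⟨i₀, hei₀⟩ : ∃ i₀, e i₀ ≠ 0 := Function.ne_iff.mp he.2.1
  have hw₀i₀ : w₀ i₀ ≠ 0 := fun h => hei₀ (hesupp' i₀ h)
  set c : ℝ := (e i₀ : ℝ) / w₀ i₀ with hc
  have hcne : c ≠ 0 := by
    rw [hc]
    exact div_ne_zero (Int.cast_ne_zero.2 hei₀) hw₀i₀
  have heF : icast e ∈ latticeSpan L := Submodule.subset_span ⟨e, he.1, rfl⟩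
  have heqc : ∀ i, (e i : ℝ) = c * w₀ i := by
    have hv0 : icast e - c • w₀ = 0 := by
      by_contra hv'ne
      set v' : Fin n → ℝ := icast e - c • w₀ with hv'def
      have hv'F : v' ∈ latticeSpan L :=
        Submodule.sub_mem _ heF (Submodule.smul_mem _ c hw₀F)
      have hv'supp : ∀ i, w₀ i = 0 → v' i = 0 := by
        intro i h
        simp [hv'def, icast, hesupp' i h, h]
      have hv'i₀ : v' i₀ = 0 := by
        simp only [hv'def, Pi.sub_apply, Pi.smul_apply, smul_eq_mul, icast, hc]
        field_simp
        ring
      obtain ⟨i₂, hi₂⟩ := Function.ne_iff.mp hv'ne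
      have hi₂' : v' i₂ ≠ 0 := hi₂
      have hw₀i₂ : w₀ i₂ ≠ 0 := fun h => hi₂' (hv'supp i₂ h)
      have hprod : v' i₂ * w₀ i₂ ≠ 0 := mul_ne_zero hi₂' hw₀i₂
      rcases lt_or_gt_of_ne hprod with hlt | hgt
      · refine key (-v') (Submodule.neg_mem _ hv'F)
          (fun i h => by simp [hv'supp i h]) ⟨i₀, hw₀i₀, by simp [hv'i₀]⟩
          ⟨i₂, ?_⟩
        have : (-v') i₂ * w₀ i₂ = -(v' i₂ * w₀ i₂) := by
          simp only [Pi.neg_apply]; ring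
        rw [this]
        linarith
      · exact key v' hv'F hv'supp ⟨i₀, hw₀i₀, hv'i₀⟩ ⟨i₂, hgt⟩
    intro i
    have := congrFun hv0 i
    simp only [Pi.sub_apply, Pi.smul_apply, smul_eq_mul, Pi.zero_apply, icast] at this
    linarith
  rcases lt_or_gt_of_ne hcne with hcneg | hcpos
  · refine ⟨-e, neg_isElementary he, fun i => ?_, fun i h => ?_⟩
    · have h1 : ((-e) i : ℝ) = -c * w₀ i := by
        simp only [Pi.neg_apply, Int.cast_neg, heqc i]; ring
      rw [h1, mul_assoc]
      exact mul_nonneg (by linarith) (hw₀conf i)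
    · have h2 : (e i : ℝ) = 0 := by rw [heqc i, hw₀supp i h, mul_zero]
      have : e i = 0 := by exact_mod_cast h2
      simp [this]
  · refine ⟨e, he, fun i => ?_, fun i h => ?_⟩
    · rw [heqc i, mul_assoc]
      exact mul_nonneg (le_of_lt hcpos) (hw₀conf i)
    · have h2 : (e i : ℝ) = 0 := by rw [heqc i, hw₀supp i h, mul_zero]
      exact_mod_cast h2

-- ## Lemma E: support function inequality
lemma wip_le_of_mem_DV {n : ℕ} {L : AddSubgroup (Fin n → ℤ)} (hL : IsZonotopal L)
    {lam : Fin n → ℝ} (hlam : ∀ i, 0 < lam i) {x : Fin n → ℝ} (hx : x ∈ DV L lam) :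
    ∀ u ∈ latticeSpan L, wip lam x u ≤ (∑ i, lam i * |u i|) / 2 := by
  classical
  suffices h : ∀ N : ℕ, ∀ u ∈ latticeSpan L,
      (Finset.univ.filter (fun i => u i ≠ 0)).card ≤ N →
      wip lam x u ≤ (∑ i, lam i * |u i|) / 2 by
    intro u hu
    exact h _ u hu le_rfl
  intro N
  induction N with
  | zero =>
    intro u hu hcard
    have hu0 : u = 0 := by
      funext i
      simp only [Pi.zero_apply]
      by_contra h0
      have : i ∈ Finset.univ.filter (fun i => u i ≠ 0) := by simp [h0]
      have := Finset.card_pos.2 ⟨i, this⟩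
      omega
    subst hu0
    simp [wip]
  | succ N ih =>
    intro u hu hcard
    by_cases hu0 : u = 0
    · subst hu0; simp [wip]
    · obtain ⟨w, hw, hwconf, hwsupp⟩ := exists_conformal_elementary hL hu hu0
      set Bf : Finset (Fin n) := Finset.univ.filter (fun i => w i ≠ 0) with hBf
      have hBne : Bf.Nonempty := by
        obtain ⟨i, hi⟩ := Function.ne_iff.mp hw.2.1
        have hi' : w i ≠ 0 := by simpa using hi
        exact ⟨i, by simp [hBf, hi']⟩
      obtain ⟨istar, histar, hmin⟩ :=
        Finset.exists_min_image Bf (fun i => u i * (w i : ℝ)) hBne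
      have histar' : w istar ≠ 0 := by simpa [hBf] using histar
      set t : ℝ := u istar * (w istar : ℝ) with ht
      have huistar : u istar ≠ 0 := by
        intro h0
        exact histar' (hwsupp istar h0)
      have htpos : 0 < t := by
        rcases lt_or_gt_of_ne (mul_ne_zero huistar (Int.cast_ne_zero.2 histar' :
          ((w istar : ℝ)) ≠ 0)) with h | h
        · exfalso
          have := hwconf istar
          nlinarith
        · exact h
      set u' : Fin n → ℝ := u - t • icast w with hu'
      have hu'F : u' ∈ latticeSpan L :=
        Submodule.sub_mem _ hu
          (Submodule.smul_mem _ t (Submodule.subset_span ⟨w, hw.1, rfl⟩))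
      have habs : ∀ i, |u' i| = |u i| - t * |(w i : ℝ)| := by
        intro i
        by_cases hwi : w i = 0
        · simp [hu', icast, hwi]
        · have hui : u i ≠ 0 := fun h0 => hwi (hwsupp i h0)
          have hti : t ≤ u i * (w i : ℝ) := hmin i (by simp [hBf, hwi])
          rcases hw.2.2.1 i with h1 | h1 | h1
          · -- w i = -1
            have hui' : u i ≤ -t := by
              rw [h1] at hti; push_cast at hti; linarith
            simp only [hu', Pi.sub_apply, Pi.smul_apply, smul_eq_mul, icast, h1]
            push_cast
            rw [abs_of_nonpos (by linarith), abs_of_nonpos (by linarith : u i ≤ 0)]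
            norm_num
            ring
          · exact absurd h1 hwi
          · -- w i = 1
            have hui' : t ≤ u i := by
              rw [h1] at hti; push_cast at hti; linarith
            simp only [hu', Pi.sub_apply, Pi.smul_apply, smul_eq_mul, icast, h1]
            push_cast
            rw [abs_of_nonneg (by linarith), abs_of_nonneg (by linarith : 0 ≤ u i)]
            norm_num
      have hu'istar : u' istar = 0 := by
        simp only [hu', Pi.sub_apply, Pi.smul_apply, smul_eq_mul, icast, ht]
        rcases hw.2.2.1 istar with h1 | h1 | h1
        · rw [h1]; push_cast; ring
        · exact absurd h1 histar'
        · rw [h1]; push_cast; ring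
      have hcard' : (Finset.univ.filter (fun i => u' i ≠ 0)).card ≤ N := by
        have hss : Finset.univ.filter (fun i => u' i ≠ 0) ⊂
            Finset.univ.filter (fun i => u i ≠ 0) := by
          constructor
          · intro i hi
            simp only [Finset.mem_filter, Finset.mem_univ, true_and] at hi ⊢
            intro h0
            apply hi
            simp [hu', h0, icast, hwsupp i h0]
          · intro hsub
            have h1 : istar ∈ Finset.univ.filter (fun i => u i ≠ 0) := by simp [huistar]
            have := hsub h1
            simp only [Finset.mem_filter, Finset.mem_univ, true_and] at this
            exact this hu'istar
        have := Finset.card_lt_card hss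
        omega
      have hIH := ih u' hu'F hcard'
      have hDV := hx.2 w hw.1
      have hsq : wip lam (icast w) (icast w) = ∑ i, lam i * |(w i : ℝ)| := by
        unfold wip
        congr 1; ext i
        simp only [icast]
        rcases hw.2.2.1 i with h1 | h1 | h1 <;> rw [h1] <;> push_cast <;> norm_num
      have hsplit : wip lam x u = wip lam x u' + t * wip lam x (icast w) := by
        rw [wip_comm lam x u, wip_comm lam x u', wip_comm lam x (icast w)]
        have : u = u' + t • icast w := by rw [hu']; abel
        rw [this, wip_add_left, wip_smul_left]
      have hsum : ∑ i, lam i * |u' i| = (∑ i, lam i * |u i|) - t * ∑ i, lam i * |(w i : ℝ)| := by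
        rw [Finset.mul_sum, ← Finset.sum_sub_distrib]
        congr 1; ext i
        rw [habs i]; ring
      rw [hsplit]
      have h2 : t * wip lam x (icast w) ≤ t * ((∑ i, lam i * |(w i : ℝ)|) / 2) := by
        apply mul_le_mul_of_nonneg_left _ (le_of_lt htpos)
        rw [← hsq]
        exact hDV
      calc wip lam x u' + t * wip lam x (icast w)
          ≤ (∑ i, lam i * |u' i|) / 2 + t * ((∑ i, lam i * |(w i : ℝ)|) / 2) := by
            exact add_le_add hIH h2
        _ = (∑ i, lam i * |u i|) / 2 := by rw [hsum]; ring

-- ## Separation: every point of DV is a weighted projection of the box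
lemma exists_box_rep {n : ℕ} {L : AddSubgroup (Fin n → ℤ)} (hL : IsZonotopal L)
    {lam : Fin n → ℝ} (hlam : ∀ i, 0 < lam i)
    (hdecomp : ∀ b : Fin n → ℝ, ∃ x ∈ latticeSpan L,
      ∀ w ∈ latticeSpan L, wip lam (b - x) w = 0)
    {x : Fin n → ℝ} (hx : x ∈ DV L lam) :
    ∃ b : Fin n → ℝ, (∀ i, |b i| ≤ 1/2) ∧ ∀ w ∈ latticeSpan L, wip lam (x - b) w = 0 := by
  classical
  by_contra hcon
  push_neg at hcon
  set K : Set (Fin n → ℝ) := Set.pi Set.univ (fun _ => Set.Icc (-(1:ℝ)/2) (1/2)) with hK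
  set M : Set (Fin n → ℝ) := {b | ∀ w ∈ latticeSpan L, wip lam (x - b) w = 0} with hM
  have hdisj : Disjoint K M := by
    rw [Set.disjoint_left]
    intro b hbK hbM
    obtain ⟨w, hw, hne⟩ := hcon b (fun i => by
      have := hbK i (Set.mem_univ i)
      rw [Set.mem_Icc] at this
      rw [abs_le]
      constructor <;> [linarith [this.1]; exact this.2])
    exact hne (hbM w hw)
  have hKcomp : IsCompact K := isCompact_univ_pi (fun i => isCompact_Icc)
  have hKconv : Convex ℝ K := convex_pi (fun i _ => convex_Icc _ _)
  have hMclosed : IsClosed M := by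
    have : M = ⋂ (w : Fin n → ℝ) (_ : w ∈ latticeSpan L), {b | wip lam (x - b) w = 0} := by
      ext b; simp [hM, Set.mem_iInter]
    rw [this]
    refine isClosed_iInter (fun w => isClosed_iInter (fun _ => ?_))
    apply isClosed_eq _ continuous_const
    unfold wip
    exact continuous_finset_sum _ (fun i _ =>
      (continuous_const.mul ((continuous_const.sub (continuous_apply i)))).mul continuous_const)
  have hMconv : Convex ℝ M := by
    intro b1 hb1 b2 hb2 a c ha hc hac
    intro w hw
    have h1 : x - (a • b1 + c • b2) = a • (x - b1) + c • (x - b2) := by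
      funext i
      simp only [Pi.add_apply, Pi.smul_apply, Pi.sub_apply, smul_eq_mul]
      linear_combination (-(x i)) * hac
    rw [h1, wip_add_left, wip_smul_left, wip_smul_left, hb1 w hw, hb2 w hw]
    ring
  obtain ⟨f, uu, vv, hfK, huv, hfM⟩ :=
    geometric_hahn_banach_compact_closed hKconv hKcomp hMconv hMclosed hdisj
  -- f vanishes on the weighted orthogonal complement
  have hxM : x ∈ M := by
    intro w hw
    simp [wip, Pi.sub_apply]
  have hperp : ∀ z : Fin n → ℝ, (∀ w ∈ latticeSpan L, wip lam z w = 0) → f z = 0 := by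
    intro z hz
    by_contra hfz
    have hmem : ∀ t : ℝ, (x - t • z) ∈ M := by
      intro t w hw
      have : x - (x - t • z) = t • z := by funext i; simp
      rw [this, wip_smul_left, hz w hw, mul_zero]
    have hval : ∀ t : ℝ, vv < f x - t * f z := by
      intro t
      have := hfM _ (hmem t)
      rwa [map_sub, map_smul, smul_eq_mul] at this
    have := hval ((f x - vv) / f z)
    rw [div_mul_cancel₀ _ hfz] at this
    linarith
  set φ : Fin n → ℝ := fun i => f (Pi.single i 1) with hφ
  have hfrepr : ∀ y : Fin n → ℝ, f y = ∑ i, y i * φ i := by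
    intro y
    have hy : y = ∑ i, y i • (Pi.single i (1:ℝ) : Fin n → ℝ) := by
      funext j
      simp [Finset.sum_apply, Pi.single_apply]
    calc f y = f (∑ i, y i • (Pi.single i (1:ℝ) : Fin n → ℝ)) := by rw [← hy]
      _ = ∑ i, y i * φ i := by
          rw [map_sum]
          congr 1; ext i
          rw [map_smul, smul_eq_mul]
  -- the separating functional comes from a vector of the span
  set uvec : Fin n → ℝ := fun i => φ i / lam i with huvec
  have hfwip : ∀ y : Fin n → ℝ, f y = wip lam uvec y := by
    intro y
    rw [hfrepr y]
    unfold wip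
    congr 1; ext i
    rw [huvec]
    have := (hlam i).ne'
    field_simp
  have huF : uvec ∈ latticeSpan L := by
    obtain ⟨y, hyF, hyperp⟩ := hdecomp uvec
    have hz : ∀ w ∈ latticeSpan L, wip lam (uvec - y) w = 0 := hyperp
    have h1 : wip lam (uvec - y) (uvec - y) = 0 := by
      have h2 : wip lam (uvec - y) uvec = 0 := by
        rw [wip_comm, ← hfwip]
        exact hperp _ hz
      have h3 : wip lam (uvec - y) y = 0 := hz y hyF
      have := wip_sub_left lam uvec y (uvec - y)
      rw [wip_comm lam uvec (uvec - y), wip_comm lam y (uvec - y)] at this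
      rw [wip_comm]
      rw [this, h2, h3, sub_zero]
    have := eq_zero_of_wip_self hlam h1
    have huy : uvec = y := by
      funext i
      have := congrFun this i
      simp only [Pi.sub_apply, Pi.zero_apply] at this
      linarith
    rw [huy]; exact hyF
  -- bound on the box side
  set bstar : Fin n → ℝ := fun i => if 0 ≤ φ i then 1/2 else -(1/2) with hbstar
  have hbK : bstar ∈ K := by
    intro i _
    rw [Set.mem_Icc, hbstar]
    by_cases h : 0 ≤ φ i <;> simp [h] <;> norm_num
  have hfb : f bstar = (∑ i, |φ i|) / 2 := by
    rw [hfrepr, Finset.sum_div]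
    congr 1; ext i
    show (if 0 ≤ φ i then (1:ℝ)/2 else -(1/2)) * φ i = |φ i| / 2
    by_cases h : 0 ≤ φ i
    · rw [if_pos h, abs_of_nonneg h]; ring
    · rw [if_neg h, abs_of_neg (not_le.1 h)]; ring
  have hlt : (∑ i, |φ i|) / 2 < f x := by
    have h1 := hfK bstar hbK
    have h2 := hfM x hxM
    rw [hfb] at h1
    linarith
  -- contradiction with the support function inequality
  have hle := wip_le_of_mem_DV hL hlam hx uvec huF
  have heq1 : wip lam x uvec = f x := by rw [hfwip, wip_comm]
  have heq2 : ∑ i, lam i * |uvec i| = ∑ i, |φ i| := by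
    congr 1; ext i
    rw [huvec]
    show lam i * |φ i / lam i| = |φ i|
    rw [abs_div, abs_of_pos (hlam i), mul_comm, div_mul_cancel₀ _ (hlam i).ne']
  rw [heq1, heq2] at hle
  linarith

-- scaling map
def scaleL {n : ℕ} (lam : Fin n → ℝ) : (Fin n → ℝ) →ₗ[ℝ] (Fin n → ℝ) where
  toFun x := fun i => lam i * x i
  map_add' x y := by funext i; simp [Pi.add_apply]; ring
  map_smul' c x := by funext i; simp [Pi.smul_apply]; ring

@[simp] lemma scaleL_apply {n : ℕ} (lam : Fin n → ℝ) (x : Fin n → ℝ) (i : Fin n) :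
    scaleL lam x i = lam i * x i := rfl

-- integer absolute value bound
lemma int_abs_le_sq (k : ℤ) : |(k:ℝ)| ≤ (k:ℝ) * (k:ℝ) := by
  by_cases hk : k = 0
  · simp [hk]
  · have h1 : (1:ℤ) ≤ |k| := Int.one_le_abs hk
    have h2 : (1:ℝ) ≤ |(k:ℝ)| := by
      rw [← Int.cast_abs]; exact_mod_cast h1
    calc |(k:ℝ)| = 1 * |(k:ℝ)| := (one_mul _).symm
      _ ≤ |(k:ℝ)| * |(k:ℝ)| := by
          apply mul_le_mul_of_nonneg_right h2 (abs_nonneg _)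
      _ = (k:ℝ) * (k:ℝ) := abs_mul_abs_self _

theorem DV_affinelyEquiv_zonotope {n d : ℕ} (L : AddSubgroup (Fin n → ℤ))
    (hL : IsZonotopal L) (hrank : Module.finrank ℝ (latticeSpan L) = d)
    (proj : (Fin n → ℝ) →ₗ[ℝ] (Fin n → ℝ))
    (hmem : ∀ z, proj z ∈ latticeSpan L)
    (horth : ∀ z, ∀ w ∈ latticeSpan L, ∑ i, (z - proj z) i * w i = 0)
    (X : Fin n → Fin d → ℝ) (hX : Submodule.span ℝ (Set.range X) = ⊤)
    (A : (Fin n → ℝ) →ₗ[ℝ] (Fin d → ℝ)) (lam : Fin n → ℝ) (hlam : ∀ i, 0 < lam i)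
    (hXA : ∀ i, X i = lam i • A (proj (Pi.single i 1))) :
    ∃ T : (Fin n → ℝ) →ₗ[ℝ] (Fin d → ℝ),
      Set.BijOn T (latticeSpan L : Set (Fin n → ℝ)) Set.univ ∧
      T '' DV L lam = zonotope X := by
  classical
  -- σ-orthogonality rewriting
  have horth' : ∀ z : Fin n → ℝ, ∀ w ∈ latticeSpan L,
      ∑ i, z i * w i = ∑ i, proj z i * w i := by
    intro z w hw
    have h1 := horth z w hw
    have h2 : ∑ i, (z - proj z) i * w i = ∑ i, z i * w i - ∑ i, proj z i * w i := by
      rw [← Finset.sum_sub_distrib]; congr 1; ext i; simp [Pi.sub_apply]; ring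
    rw [h2] at h1
    linarith
  have hproj0 : ∀ y : Fin n → ℝ, (∀ w ∈ latticeSpan L, ∑ i, y i * w i = 0) → proj y = 0 := by
    intro y hy
    have h4 : ∑ i, proj y i * proj y i = 0 := by
      rw [← horth' y (proj y) (hmem y)]
      exact hy (proj y) (hmem y)
    funext i
    have h5 : ∀ i ∈ Finset.univ, (0:ℝ) ≤ proj y i * proj y i := fun i _ => mul_self_nonneg _
    have h6 := (Finset.sum_eq_zero_iff_of_nonneg h5).mp h4 i (Finset.mem_univ i)
    simpa [Pi.zero_apply] using mul_self_eq_zero.mp h6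
  have hwipsum : ∀ z w : Fin n → ℝ, wip lam z w = ∑ i, (scaleL lam z) i * w i := by
    intro z w
    unfold wip
    congr 1
  have hprojlam : ∀ z : Fin n → ℝ, (∀ w ∈ latticeSpan L, wip lam z w = 0) →
      proj (scaleL lam z) = 0 := by
    intro z hz
    apply hproj0
    intro w hw
    rw [← hwipsum z w]
    exact hz w hw
  -- weighted orthogonal decomposition
  have hdecomp : ∀ b : Fin n → ℝ, ∃ x ∈ latticeSpan L,
      ∀ w ∈ latticeSpan L, wip lam (b - x) w = 0 := by
    intro b
    set Φ : latticeSpan L →ₗ[ℝ] latticeSpan L :=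
      (proj ∘ₗ scaleL lam).restrict (fun x _ => hmem _) with hΦ
    have hinj : Function.Injective Φ := by
      rw [← LinearMap.ker_eq_bot]
      apply LinearMap.ker_eq_bot'.mpr
      intro m hm
      have hm0 : proj (scaleL lam (m : Fin n → ℝ)) = 0 := by
        have := congrArg Subtype.val hm
        simpa [hΦ, LinearMap.restrict_apply] using this
      have hwz : wip lam (m : Fin n → ℝ) (m : Fin n → ℝ) = 0 := by
        rw [hwipsum]
        rw [horth' (scaleL lam (m : Fin n → ℝ)) _ m.2, hm0]
        simp
      have := eq_zero_of_wip_self hlam hwz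
      exact Subtype.ext this
    have hsurj : Function.Surjective Φ := LinearMap.injective_iff_surjective.mp hinj
    obtain ⟨x, hx⟩ := hsurj ⟨proj (scaleL lam b), hmem _⟩
    refine ⟨(x : Fin n → ℝ), x.2, ?_⟩
    intro w hw
    have hx' : proj (scaleL lam (x : Fin n → ℝ)) = proj (scaleL lam b) := by
      have := congrArg Subtype.val hx
      simpa [hΦ, LinearMap.restrict_apply] using this
    rw [hwipsum]
    rw [horth' (scaleL lam (b - (x : Fin n → ℝ))) _ hw]
    have : proj (scaleL lam (b - (x : Fin n → ℝ))) = 0 := by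
      rw [map_sub, map_sub, hx', sub_self]
    rw [this]
    simp
  -- the linear map
  set T : (Fin n → ℝ) →ₗ[ℝ] (Fin d → ℝ) := (2:ℝ) • (A ∘ₗ proj ∘ₗ scaleL lam) with hT
  have hTapp : ∀ z, T z = (2:ℝ) • A (proj (scaleL lam z)) := by
    intro z
    simp [hT]
  have hTperp : ∀ z : Fin n → ℝ, (∀ w ∈ latticeSpan L, wip lam z w = 0) → T z = 0 := by
    intro z hz
    rw [hTapp, hprojlam z hz, map_zero, smul_zero]
  have hTbox : ∀ b : Fin n → ℝ, T b = ∑ i, (2 * b i) • X i := by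
    intro b
    have hb : scaleL lam b = ∑ i, (lam i * b i) • (Pi.single i (1:ℝ) : Fin n → ℝ) := by
      funext j
      simp [Finset.sum_apply, Pi.single_apply]
    rw [hTapp, hb, map_sum, map_sum]
    rw [Finset.smul_sum]
    refine Finset.sum_congr rfl (fun i _ => ?_)
    rw [map_smul, map_smul, hXA i, smul_smul, smul_smul]
    congr 1
    ring
  -- image of DV is contained in the zonotope
  have himg1 : ∀ x ∈ DV L lam, T x ∈ zonotope X := by
    intro x hx
    obtain ⟨b, hb, hborth⟩ := exists_box_rep hL hlam hdecomp hx
    have hTx : T x = T b := by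
      have h1 : T (x - b) = 0 := hTperp _ hborth
      rw [map_sub] at h1
      exact sub_eq_zero.mp h1
    refine ⟨fun i => 2 * b i, fun i => ?_, ?_⟩
    · rw [abs_mul]
      have := hb i
      rw [abs_two]
      linarith
    · rw [hTx, hTbox b]
  -- points of DV hitting each zonotope point
  have himg2 : ∀ c : Fin n → ℝ, (∀ i, |c i| ≤ 1) →
      ∃ x ∈ DV L lam, T x = ∑ i, c i • X i := by
    intro c hc
    set b : Fin n → ℝ := fun i => c i / 2 with hbdef
    obtain ⟨x, hxF, hxorth⟩ := hdecomp b
    have hwipxb : ∀ w ∈ latticeSpan L, wip lam x w = wip lam b w := by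
      intro w hw
      have := hxorth w hw
      rw [wip_sub_left] at this
      linarith
    have hxDV : x ∈ DV L lam := by
      refine ⟨hxF, fun v hv => ?_⟩
      have hvF : icast v ∈ latticeSpan L := Submodule.subset_span ⟨v, hv, rfl⟩
      rw [hwipxb _ hvF]
      unfold wip
      rw [Finset.sum_div]
      apply Finset.sum_le_sum
      intro i _
      have hbi : |b i| ≤ 1/2 := by
        show |c i / 2| ≤ 1/2
        rw [abs_div, abs_two]
        have := hc i
        linarith
      have habs : |(v i : ℝ)| ≤ (v i : ℝ) * (v i : ℝ) := int_abs_le_sq (v i)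
      have h1 : b i * (icast v) i ≤ (icast v) i * (icast v) i / 2 := by
        have h2 : b i * (icast v) i ≤ |b i| * |(icast v) i| := by
          calc b i * (icast v) i ≤ |b i * (icast v) i| := le_abs_self _
            _ = |b i| * |(icast v) i| := abs_mul _ _
        have h3 : |b i| * |(icast v) i| ≤ (1/2) * ((v i : ℝ) * (v i : ℝ)) := by
          apply mul_le_mul hbi habs (abs_nonneg _) (by norm_num)
        show b i * ((v i : ℝ)) ≤ (v i : ℝ) * (v i : ℝ) / 2
        calc b i * ((v i : ℝ)) ≤ |b i| * |(icast v) i| := h2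
          _ ≤ (1/2) * ((v i : ℝ) * (v i : ℝ)) := h3
          _ = (v i : ℝ) * (v i : ℝ) / 2 := by ring
      have hli := (hlam i).le
      calc lam i * b i * (icast v) i = lam i * (b i * (icast v) i) := by ring
        _ ≤ lam i * ((icast v) i * (icast v) i / 2) := mul_le_mul_of_nonneg_left h1 hli
        _ = lam i * (icast v) i * (icast v) i / 2 := by ring
    refine ⟨x, hxDV, ?_⟩
    have hTx : T x = T b := by
      have h1 : T (x - b) = 0 := by
        apply hTperp
        intro w hw
        have := hxorth w hw
        rw [wip_sub_left] at this ⊢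
        linarith
      rw [map_sub] at h1
      exact sub_eq_zero.mp h1
    rw [hTx, hTbox b]
    refine Finset.sum_congr rfl (fun i _ => ?_)
    congr 1
    show 2 * (c i / 2) = c i
    ring
  -- restriction of T to the span
  set Tres : latticeSpan L →ₗ[ℝ] (Fin d → ℝ) := T.domRestrict (latticeSpan L) with hTres
  have hXmem : ∀ i, ∃ x ∈ DV L lam, T x = X i := by
    intro i
    obtain ⟨x, hxDV, hTx⟩ := himg2 (fun j => if j = i then 1 else 0)
      (fun j => by by_cases h : j = i <;> simp [h])
    refine ⟨x, hxDV, ?_⟩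
    rw [hTx, Finset.sum_eq_single i]
    · simp
    · intro j _ hj; simp [hj]
    · intro h; exact absurd (Finset.mem_univ i) h
  have hrange : LinearMap.range Tres = ⊤ := by
    rw [← top_le_iff, ← hX, Submodule.span_le]
    rintro _ ⟨i, rfl⟩
    obtain ⟨x, hxDV, hTx⟩ := hXmem i
    exact ⟨⟨x, hxDV.1⟩, hTx⟩
  have hsurjT : Function.Surjective Tres := LinearMap.range_eq_top.1 hrange
  have hfr : Module.finrank ℝ (latticeSpan L) = Module.finrank ℝ (Fin d → ℝ) := by
    rw [hrank, Module.finrank_pi, Fintype.card_fin]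
  have hinjT : Function.Injective Tres :=
    (LinearMap.injective_iff_surjective_of_finrank_eq_finrank hfr).mpr hsurjT
  refine ⟨T, ⟨fun x _ => Set.mem_univ _, ?_, ?_⟩, ?_⟩
  · intro x hxF y hyF hxy
    have h1 : Tres ⟨x, hxF⟩ = Tres ⟨y, hyF⟩ := by
      simp only [hTres, LinearMap.domRestrict_apply]
      exact hxy
    exact congrArg Subtype.val (hinjT h1)
  · intro z _
    obtain ⟨⟨x, hxF⟩, hTx⟩ := hsurjT z
    exact ⟨x, hxF, hTx⟩
  · ext z
    constructor
    · rintro ⟨x, hxDV, rfl⟩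
      exact himg1 x hxDV
    · rintro ⟨c, hc, rfl⟩
      obtain ⟨x, hxDV, hTx⟩ := himg2 c hc
      exact ⟨x, hxDV, hTx⟩
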